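/- The twisted Steenrod square squares to zero: T ∘ T = 0 as a map R → R, i.e. for every f ∈ R one has x_1·(x_1·f + D(f)) + D(x_1·f + D(f)) = 0. (This is the computation Sq²_{det γ_n} ∘ Sq²_{det γ_n} = 0 carried out in the proof of Proposition 3.7 of the paper.) -/
import Mathlib


open MvPolynomial

/-- The variable `x_j` (1-indexed, `1 ≤ j ≤ n`) in the mod-2 Chow ring
`Ch^•(BGL_n) ≅ (ℤ/2ℤ)[x_1,…,x_n]`; by convention `x_j = 0` for `j` out of range
(in particular `x_{n+1} = 0`). -/
noncomputable def xv (n : ℕ) (j : ℕ) : MvPolynomial (Fin n) (ZMod 2) :=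
  if h : 1 ≤ j ∧ j ≤ n then X (⟨j - 1, by omega⟩ : Fin n) else 0

lemma xv_eq_X (n : ℕ) (i : Fin n) : xv n (i.1 + 1) = X i := by
  simp only [xv]
  rw [dif_pos ⟨by omega, by omega⟩]
  congr

lemma xv_zero_of_gt {n j : ℕ} (h : n < j) : xv n j = 0 := by
  simp only [xv]
  rw [dif_neg (by omega)]

lemma consec_cast_zero (k : ℕ) : ((k : ℕ) : ZMod 2) * ((k + 1 : ℕ) : ZMod 2) = 0 := by
  have h : ((k * (k+1) : ℕ) : ZMod 2) = 0 := by
    rw [ZMod.natCast_eq_zero_iff]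
    exact (Nat.even_mul_succ_self k).two_dvd
  rw [← Nat.cast_mul]
  exact h

lemma two_zero (n : ℕ) : (2 : MvPolynomial (Fin n) (ZMod 2)) = 0 := by
  exact_mod_cast CharTwo.two_eq_zero

lemma D_map_C {n : ℕ}
    (D : Derivation (ZMod 2) (MvPolynomial (Fin n) (ZMod 2)) (MvPolynomial (Fin n) (ZMod 2)))
    (c : ZMod 2) : D (C c) = 0 := by
  rw [← MvPolynomial.algebraMap_eq]; exact D.map_algebraMap c

lemma DD_X (n : ℕ)
    (D : Derivation (ZMod 2) (MvPolynomial (Fin n) (ZMod 2)) (MvPolynomial (Fin n) (ZMod 2)))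
    (hD : ∀ j : ℕ, 1 ≤ j → j ≤ n →
      D (xv n j) = xv n 1 * xv n j + C ((j - 1 : ℕ) : ZMod 2) * xv n (j + 1))
    (i : Fin n) : D (D (X i)) = 0 := by
  have hi : (i : ℕ) + 1 ≤ n := i.isLt
  have h1 : D (xv n 1) = xv n 1 * xv n 1 := by
    rw [hD 1 le_rfl (by omega)]
    norm_num
  have hj : D (X i) = xv n 1 * X i + C ((i : ℕ) : ZMod 2) * xv n ((i : ℕ) + 2) := by
    rw [← xv_eq_X, hD ((i : ℕ) + 1) (by omega) hi]
    simp only [Nat.add_sub_cancel]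
  rw [hj, map_add, Derivation.leibniz, Derivation.leibniz, D_map_C, ← xv_eq_X n i, h1,
    xv_eq_X, hj]
  simp only [smul_eq_mul, smul_zero, mul_zero, add_zero]
  rcases le_or_gt ((i : ℕ) + 2) n with hle | hlt
  · have h2 : D (xv n ((i : ℕ) + 2)) = xv n 1 * xv n ((i : ℕ) + 2)
        + C (((i : ℕ) + 1 : ℕ) : ZMod 2) * xv n ((i : ℕ) + 3) := by
      rw [hD ((i : ℕ) + 2) (by omega) hle]
      norm_num
    rw [h2]
    have hc : (C ((i : ℕ) : ZMod 2) : MvPolynomial (Fin n) (ZMod 2))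
        * C (((i : ℕ) + 1 : ℕ) : ZMod 2) = 0 := by
      rw [← map_mul, consec_cast_zero, map_zero]
    linear_combination (xv n ((i : ℕ) + 3)) * hc +
      (xv n 1 * xv n 1 * X i + C ((i : ℕ) : ZMod 2) * xv n 1 * xv n ((i : ℕ) + 2)) * two_zero n
  · have h0 : xv n ((i : ℕ) + 2) = 0 := xv_zero_of_gt hlt
    rw [h0]
    simp only [mul_zero, map_zero, smul_zero, add_zero, zero_add, smul_eq_mul]
    linear_combination (xv n 1 * xv n 1 * X i) * two_zero n

lemma DD_zero (n : ℕ)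
    (D : Derivation (ZMod 2) (MvPolynomial (Fin n) (ZMod 2)) (MvPolynomial (Fin n) (ZMod 2)))
    (hD : ∀ j : ℕ, 1 ≤ j → j ≤ n →
      D (xv n j) = xv n 1 * xv n j + C ((j - 1 : ℕ) : ZMod 2) * xv n (j + 1))
    (f : MvPolynomial (Fin n) (ZMod 2)) : D (D f) = 0 := by
  induction f using MvPolynomial.induction_on with
  | C a => rw [D_map_C, map_zero]
  | add p q hp hq => rw [map_add, map_add, hp, hq, add_zero]
  | mul_X p i hp =>
    rw [Derivation.leibniz, map_add]
    simp only [smul_eq_mul]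
    rw [Derivation.leibniz, Derivation.leibniz]
    simp only [smul_eq_mul]
    rw [hp, DD_X n D hD i]
    linear_combination (D p * D (X i)) * two_zero n

/-- The twisted Steenrod square `T = Sq²_{det γ_n}`, `T(f) = x_1·f + D(f)`, squares to zero:
for every `f`, `x_1·(x_1·f + D(f)) + D(x_1·f + D(f)) = 0`. -/
theorem twisted_steenrod_sq_zero (n : ℕ) (hn : 1 ≤ n)
    (D : Derivation (ZMod 2) (MvPolynomial (Fin n) (ZMod 2)) (MvPolynomial (Fin n) (ZMod 2)))
    (hD : ∀ j : ℕ, 1 ≤ j → j ≤ n →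
      D (xv n j) = xv n 1 * xv n j + C ((j - 1 : ℕ) : ZMod 2) * xv n (j + 1)) :
    ∀ f : MvPolynomial (Fin n) (ZMod 2),
      xv n 1 * (xv n 1 * f + D f) + D (xv n 1 * f + D f) = 0 := by
  intro f
  have h1 : D (xv n 1) = xv n 1 * xv n 1 := by
    rw [hD 1 le_rfl hn]; norm_num
  rw [map_add, Derivation.leibniz, h1, DD_zero n D hD]
  simp only [smul_eq_mul]
  linear_combination (xv n 1 * xv n 1 * f + xv n 1 * D f) * two_zero n
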